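/- Let u, v be real-valued C¹ functions of (α,β) on a region where sin β ≠ 0, and let F = u + ι(α,β)·v. If ∂F/∂ιₗ = 2v, then ∂(ι·F)/∂ιₗ = 2u. -/

import Mathlib

open Quaternion

noncomputable section

set_option maxHeartbeats 2000000

/-- `ι(α,β) = cos α sin β · i + sin α sin β · j + cos β · k`, a unit imaginary quaternion. -/
def iota (α β : ℝ) : ℍ[ℝ] :=
  ⟨0, Real.cos α * Real.sin β, Real.sin α * Real.sin β, Real.cos β⟩
/-- `ι_α = ∂ι/∂α`. -/
def iotaA (α β : ℝ) : ℍ[ℝ] := deriv (fun a => iota a β) α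
/-- `ι_β = ∂ι/∂β`. -/
def iotaB (α β : ℝ) : ℍ[ℝ] := deriv (fun b => iota α b) β

/-- Partial derivative in `α` of a quaternion-valued function of `(α,β)`. -/
def pA (g : ℝ → ℝ → ℍ[ℝ]) (α β : ℝ) : ℍ[ℝ] := deriv (fun a => g a β) α
/-- Partial derivative in `β` of a quaternion-valued function of `(α,β)`. -/
def pB (g : ℝ → ℝ → ℍ[ℝ]) (α β : ℝ) : ℍ[ℝ] := deriv (fun b => g α b) β
/-- The left angular derivative `∂g/∂ιₗ := ι_α⁻¹ (∂g/∂α) + ι_β⁻¹ (∂g/∂β)`. -/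
def DI (g : ℝ → ℝ → ℍ[ℝ]) (α β : ℝ) : ℍ[ℝ] :=
  (iotaA α β)⁻¹ * pA g α β + (iotaB α β)⁻¹ * pB g α β

/-- Constructor for real quaternions with the right type. -/
def mkQ (a b c d : ℝ) : ℍ[ℝ] := ⟨a, b, c, d⟩

@[simp] lemma mkQ_re (a b c d : ℝ) : (mkQ a b c d).re = a := rfl
@[simp] lemma mkQ_imI (a b c d : ℝ) : (mkQ a b c d).imI = b := rfl
@[simp] lemma mkQ_imJ (a b c d : ℝ) : (mkQ a b c d).imJ = c := rfl
@[simp] lemma mkQ_imK (a b c d : ℝ) : (mkQ a b c d).imK = d := rfl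

lemma mkQ_mul (a b c d a' b' c' d' : ℝ) :
    mkQ a b c d * mkQ a' b' c' d' =
      mkQ (a*a' - b*b' - c*c' - d*d') (a*b' + b*a' + c*d' - d*c')
        (a*c' - b*d' + c*a' + d*b') (a*d' + b*c' - c*b' + d*a') := by
  apply Quaternion.ext <;>
    simp [Quaternion.re_mul, Quaternion.imI_mul, Quaternion.imJ_mul, Quaternion.imK_mul]

lemma iota_eq (α β : ℝ) :
    iota α β = mkQ 0 (Real.cos α * Real.sin β) (Real.sin α * Real.sin β) (Real.cos β) := rfl

lemma coe_eq_mkQ (r : ℝ) : ((r : ℝ) : ℍ[ℝ]) = mkQ r 0 0 0 := rfl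

lemma one_eq_mkQ : (1 : ℍ[ℝ]) = mkQ 1 0 0 0 := rfl

/-- derivative of a quaternion-valued function given componentwise -/
lemma hasDerivAt_mkQ {f g h k : ℝ → ℝ} {f' g' h' k' : ℝ} {x : ℝ}
    (hf : HasDerivAt f f' x) (hg : HasDerivAt g g' x) (hh : HasDerivAt h h' x)
    (hk : HasDerivAt k k' x) :
    HasDerivAt (fun t => mkQ (f t) (g t) (h t) (k t)) (mkQ f' g' h' k') x := by
  have e1 : (fun t => mkQ (f t) (g t) (h t) (k t))
      = fun t => f t • mkQ 1 0 0 0 + g t • mkQ 0 1 0 0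
          + h t • mkQ 0 0 1 0 + k t • mkQ 0 0 0 1 := by
    funext t
    apply Quaternion.ext <;> simp
  rw [e1]
  have h2 := (((hf.smul_const (mkQ 1 0 0 0)).add
      (hg.smul_const (mkQ 0 1 0 0))).add
      (hh.smul_const (mkQ 0 0 1 0))).add
      (hk.smul_const (mkQ 0 0 0 1))
  exact h2.congr_deriv (by apply Quaternion.ext <;> simp)

/-- abstract algebraic key lemma -/
lemma key (I P A Q B X Y : ℍ[ℝ]) (u v : ℝ)
    (hPA : P * A = 1) (hQB : Q * B = 1)
    (hIP : I * P = -(P * I)) (hIQ : I * Q = -(Q * I))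
    (h : P * X + Q * Y = ((2 * v : ℝ) : ℍ[ℝ])) :
    P * (A * (((u : ℝ) : ℍ[ℝ]) + I * ((v : ℝ) : ℍ[ℝ])) + I * X)
      + Q * (B * (((u : ℝ) : ℍ[ℝ]) + I * ((v : ℝ) : ℍ[ℝ])) + I * Y)
      = ((2 * u : ℝ) : ℍ[ℝ]) := by
  have hP' : P * I = -(I * P) := by rw [hIP, neg_neg]
  have hQ' : Q * I = -(I * Q) := by rw [hIQ, neg_neg]
  have h2v : ((2 * v : ℝ) : ℍ[ℝ]) = ((v : ℝ) : ℍ[ℝ]) + ((v : ℝ) : ℍ[ℝ]) := by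
    rw [two_mul, Quaternion.coe_add]
  have h2u : ((2 * u : ℝ) : ℍ[ℝ]) = ((u : ℝ) : ℍ[ℝ]) + ((u : ℝ) : ℍ[ℝ]) := by
    rw [two_mul, Quaternion.coe_add]
  set F : ℍ[ℝ] := ((u : ℝ) : ℍ[ℝ]) + I * ((v : ℝ) : ℍ[ℝ]) with hF
  calc P * (A * F + I * X) + Q * (B * F + I * Y)
      = (P * A) * F + (Q * B) * F + ((P * I) * X + (Q * I) * Y) := by noncomm_ring
    _ = F + F - I * (P * X + Q * Y) := by rw [hPA, hQB, hP', hQ']; noncomm_ring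
    _ = F + F - I * ((2 * v : ℝ) : ℍ[ℝ]) := by rw [h]
    _ = ((2 * u : ℝ) : ℍ[ℝ]) := by rw [hF, h2u, h2v]; noncomm_ring


/-- For real-valued `C¹` functions `u, v` of `(α,β)` on a region where
`sin β ≠ 0` and `F = u + ι v`, if `∂F/∂ιₗ = 2v` then `∂(ι F)/∂ιₗ = 2u`. -/
theorem angular_deriv_iota_mul_eq (S : Set (ℝ × ℝ)) (hS : IsOpen S)
    (hSsin : ∀ x ∈ S, Real.sin x.2 ≠ 0)
    (u v : ℝ → ℝ → ℝ)
    (hu : ContDiffOn ℝ 1 (fun x : ℝ × ℝ => u x.1 x.2) S)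
    (hv : ContDiffOn ℝ 1 (fun x : ℝ × ℝ => v x.1 x.2) S)
    (heq : ∀ x ∈ S,
      DI (fun a b => ((u a b : ℝ) : ℍ[ℝ]) + iota a b * ((v a b : ℝ) : ℍ[ℝ])) x.1 x.2
        = ((2 * v x.1 x.2 : ℝ) : ℍ[ℝ])) :
    ∀ x ∈ S,
      DI (fun a b => iota a b * (((u a b : ℝ) : ℍ[ℝ]) + iota a b * ((v a b : ℝ) : ℍ[ℝ]))) x.1 x.2
        = ((2 * u x.1 x.2 : ℝ) : ℍ[ℝ]) := by
  rintro ⟨α, β⟩ hx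
  have hs : Real.sin β ≠ 0 := hSsin (α, β) hx
  have hud : DifferentiableAt ℝ (fun p : ℝ × ℝ => u p.1 p.2) (α, β) :=
    ((hu.contDiffAt (hS.mem_nhds hx)).differentiableAt one_ne_zero)
  have hvd : DifferentiableAt ℝ (fun p : ℝ × ℝ => v p.1 p.2) (α, β) :=
    ((hv.contDiffAt (hS.mem_nhds hx)).differentiableAt one_ne_zero)
  set uα : ℝ := fderiv ℝ (fun p : ℝ × ℝ => u p.1 p.2) (α, β) (1, 0) with huα
  set uβ : ℝ := fderiv ℝ (fun p : ℝ × ℝ => u p.1 p.2) (α, β) (0, 1) with huβ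
  set vα : ℝ := fderiv ℝ (fun p : ℝ × ℝ => v p.1 p.2) (α, β) (1, 0) with hvα
  set vβ : ℝ := fderiv ℝ (fun p : ℝ × ℝ => v p.1 p.2) (α, β) (0, 1) with hvβ
  have lineA : HasDerivAt (fun a : ℝ => ((a, β) : ℝ × ℝ)) ((1 : ℝ), (0 : ℝ)) α :=
    (hasDerivAt_id α).prodMk (hasDerivAt_const α β)
  have lineB : HasDerivAt (fun b : ℝ => ((α, b) : ℝ × ℝ)) ((0 : ℝ), (1 : ℝ)) β :=
    (hasDerivAt_const β α).prodMk (hasDerivAt_id β)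
  have hua : HasDerivAt (fun a => u a β) uα α :=
    by have := hud.hasFDerivAt.comp_hasDerivAt α lineA; exact this
  have hub : HasDerivAt (fun b => u α b) uβ β :=
    hud.hasFDerivAt.comp_hasDerivAt β lineB
  have hva : HasDerivAt (fun a => v a β) vα α :=
    by have := hvd.hasFDerivAt.comp_hasDerivAt α lineA; exact this
  have hvb : HasDerivAt (fun b => v α b) vβ β :=
    hvd.hasFDerivAt.comp_hasDerivAt β lineB
  set I : ℍ[ℝ] := iota α β with hI
  set Ia : ℍ[ℝ] := mkQ 0 (-Real.sin α * Real.sin β) (Real.cos α * Real.sin β) 0 with hIa'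
  set Ib : ℍ[ℝ] := mkQ 0 (Real.cos α * Real.cos β) (Real.sin α * Real.cos β) (-Real.sin β)
    with hIb'
  have hIotaA : HasDerivAt (fun a => iota a β) Ia α := by
    have h0 := hasDerivAt_mkQ (f := fun _ : ℝ => (0:ℝ))
      (g := fun a => Real.cos a * Real.sin β)
      (h := fun a => Real.sin a * Real.sin β) (k := fun _ => Real.cos β)
      (hasDerivAt_const α 0) ((Real.hasDerivAt_cos α).mul_const (Real.sin β))
      ((Real.hasDerivAt_sin α).mul_const (Real.sin β)) (hasDerivAt_const α (Real.cos β))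
    simpa [iota_eq, hIa'] using h0
  have hIotaB : HasDerivAt (fun b => iota α b) Ib β := by
    have h0 := hasDerivAt_mkQ (f := fun _ : ℝ => (0:ℝ))
      (g := fun b => Real.cos α * Real.sin b)
      (h := fun b => Real.sin α * Real.sin b) (k := fun b => Real.cos b)
      (hasDerivAt_const β 0) ((Real.hasDerivAt_sin β).const_mul (Real.cos α))
      ((Real.hasDerivAt_sin β).const_mul (Real.sin α)) (Real.hasDerivAt_cos β)
    simpa [iota_eq, hIb', mul_comm] using h0
  have hiA : iotaA α β = Ia := hIotaA.deriv
  have hiB : iotaB α β = Ib := hIotaB.deriv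
  set P : ℍ[ℝ] := mkQ 0 (Real.sin α / Real.sin β) (-(Real.cos α / Real.sin β)) 0 with hP'
  set Q : ℍ[ℝ] := mkQ 0 (-(Real.cos α * Real.cos β)) (-(Real.sin α * Real.cos β)) (Real.sin β)
    with hQ'
  have pyth_a : Real.sin α ^ 2 + Real.cos α ^ 2 = 1 := Real.sin_sq_add_cos_sq α
  have pyth_b : Real.sin β ^ 2 + Real.cos β ^ 2 = 1 := Real.sin_sq_add_cos_sq β
  have hIaP : Ia * P = 1 := by
    rw [hIa', hP', mkQ_mul, one_eq_mkQ]
    apply Quaternion.ext <;> simp only [mkQ_re, mkQ_imI, mkQ_imJ, mkQ_imK] <;> (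
      first
        | ring1
        | linear_combination Real.sin β * pyth_a
        | linear_combination (Real.cos β ^ 2) * pyth_a + pyth_b
        | linear_combination (2 * Real.sin β * Real.cos β) * pyth_a
        | linear_combination (-(2 * Real.sin β * Real.cos β)) * pyth_a
        | (field_simp
           first
             | ring1
             | linear_combination Real.sin β * pyth_a
             | linear_combination (Real.cos β ^ 2) * pyth_a + pyth_b
             | linear_combination (2 * Real.sin β * Real.cos β) * pyth_a
             | linear_combination (-(2 * Real.sin β * Real.cos β)) * pyth_a
             | linear_combination pyth_a))
  have hPIa : P * Ia = 1 := by
    rw [hIa', hP', mkQ_mul, one_eq_mkQ]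
    apply Quaternion.ext <;> simp only [mkQ_re, mkQ_imI, mkQ_imJ, mkQ_imK] <;> (
      first
        | ring1
        | linear_combination Real.sin β * pyth_a
        | linear_combination (Real.cos β ^ 2) * pyth_a + pyth_b
        | linear_combination (2 * Real.sin β * Real.cos β) * pyth_a
        | linear_combination (-(2 * Real.sin β * Real.cos β)) * pyth_a
        | (field_simp
           first
             | ring1
             | linear_combination Real.sin β * pyth_a
             | linear_combination (Real.cos β ^ 2) * pyth_a + pyth_b
             | linear_combination (2 * Real.sin β * Real.cos β) * pyth_a
             | linear_combination (-(2 * Real.sin β * Real.cos β)) * pyth_a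
             | linear_combination pyth_a))
  have hIbQ : Ib * Q = 1 := by
    rw [hIb', hQ', mkQ_mul, one_eq_mkQ]
    apply Quaternion.ext <;> simp only [mkQ_re, mkQ_imI, mkQ_imJ, mkQ_imK] <;> (
      first
        | ring1
        | linear_combination Real.sin β * pyth_a
        | linear_combination (Real.cos β ^ 2) * pyth_a + pyth_b
        | linear_combination (2 * Real.sin β * Real.cos β) * pyth_a
        | linear_combination (-(2 * Real.sin β * Real.cos β)) * pyth_a
        | (field_simp
           first
             | ring1
             | linear_combination Real.sin β * pyth_a
             | linear_combination (Real.cos β ^ 2) * pyth_a + pyth_b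
             | linear_combination (2 * Real.sin β * Real.cos β) * pyth_a
             | linear_combination (-(2 * Real.sin β * Real.cos β)) * pyth_a))
  have hQIb : Q * Ib = 1 := by
    rw [hIb', hQ', mkQ_mul, one_eq_mkQ]
    apply Quaternion.ext <;> simp only [mkQ_re, mkQ_imI, mkQ_imJ, mkQ_imK] <;> (
      first
        | ring1
        | linear_combination Real.sin β * pyth_a
        | linear_combination (Real.cos β ^ 2) * pyth_a + pyth_b
        | linear_combination (2 * Real.sin β * Real.cos β) * pyth_a
        | linear_combination (-(2 * Real.sin β * Real.cos β)) * pyth_a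
        | (field_simp
           first
             | ring1
             | linear_combination Real.sin β * pyth_a
             | linear_combination (Real.cos β ^ 2) * pyth_a + pyth_b
             | linear_combination (2 * Real.sin β * Real.cos β) * pyth_a
             | linear_combination (-(2 * Real.sin β * Real.cos β)) * pyth_a))
  have hinvA : Ia⁻¹ = P := inv_eq_of_mul_eq_one_right hIaP
  have hinvB : Ib⁻¹ = Q := inv_eq_of_mul_eq_one_right hIbQ
  have hIP : I * P = -(P * I) := by
    rw [hI, iota_eq, hP', mkQ_mul, mkQ_mul]
    apply Quaternion.ext <;>
      simp only [mkQ_re, mkQ_imI, mkQ_imJ, mkQ_imK, Quaternion.re_neg, Quaternion.imI_neg,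
        Quaternion.imJ_neg, Quaternion.imK_neg] <;> (
      first
        | ring1
        | linear_combination Real.sin β * pyth_a
        | linear_combination (Real.cos β ^ 2) * pyth_a + pyth_b
        | linear_combination (2 * Real.sin β * Real.cos β) * pyth_a
        | linear_combination (-(2 * Real.sin β * Real.cos β)) * pyth_a
        | (field_simp
           first
             | ring1
             | linear_combination Real.sin β * pyth_a
             | linear_combination (Real.cos β ^ 2) * pyth_a + pyth_b
             | linear_combination (2 * Real.sin β * Real.cos β) * pyth_a
             | linear_combination (-(2 * Real.sin β * Real.cos β)) * pyth_a))
  have hIQ : I * Q = -(Q * I) := by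
    rw [hI, iota_eq, hQ', mkQ_mul, mkQ_mul]
    apply Quaternion.ext <;>
      simp only [mkQ_re, mkQ_imI, mkQ_imJ, mkQ_imK, Quaternion.re_neg, Quaternion.imI_neg,
        Quaternion.imJ_neg, Quaternion.imK_neg] <;> (
      first
        | ring1
        | linear_combination Real.sin β * pyth_a
        | linear_combination (Real.cos β ^ 2) * pyth_a + pyth_b
        | linear_combination (2 * Real.sin β * Real.cos β) * pyth_a
        | linear_combination (-(2 * Real.sin β * Real.cos β)) * pyth_a
        | (field_simp
           first
             | ring1
             | linear_combination Real.sin β * pyth_a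
             | linear_combination (Real.cos β ^ 2) * pyth_a + pyth_b
             | linear_combination (2 * Real.sin β * Real.cos β) * pyth_a
             | linear_combination (-(2 * Real.sin β * Real.cos β)) * pyth_a))
  have hcua : HasDerivAt (fun a => ((u a β : ℝ) : ℍ[ℝ])) ((uα : ℝ) : ℍ[ℝ]) α := by
    have h0 := hasDerivAt_mkQ (f := fun a => u a β) (g := fun _ : ℝ => (0:ℝ))
      (h := fun _ : ℝ => (0:ℝ)) (k := fun _ : ℝ => (0:ℝ))
      hua (hasDerivAt_const α 0) (hasDerivAt_const α 0) (hasDerivAt_const α 0)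
    simpa [coe_eq_mkQ] using h0
  have hcub : HasDerivAt (fun b => ((u α b : ℝ) : ℍ[ℝ])) ((uβ : ℝ) : ℍ[ℝ]) β := by
    have h0 := hasDerivAt_mkQ (f := fun b => u α b) (g := fun _ : ℝ => (0:ℝ))
      (h := fun _ : ℝ => (0:ℝ)) (k := fun _ : ℝ => (0:ℝ))
      hub (hasDerivAt_const β 0) (hasDerivAt_const β 0) (hasDerivAt_const β 0)
    simpa [coe_eq_mkQ] using h0
  have hcva : HasDerivAt (fun a => ((v a β : ℝ) : ℍ[ℝ])) ((vα : ℝ) : ℍ[ℝ]) α := by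
    have h0 := hasDerivAt_mkQ (f := fun a => v a β) (g := fun _ : ℝ => (0:ℝ))
      (h := fun _ : ℝ => (0:ℝ)) (k := fun _ : ℝ => (0:ℝ))
      hva (hasDerivAt_const α 0) (hasDerivAt_const α 0) (hasDerivAt_const α 0)
    simpa [coe_eq_mkQ] using h0
  have hcvb : HasDerivAt (fun b => ((v α b : ℝ) : ℍ[ℝ])) ((vβ : ℝ) : ℍ[ℝ]) β := by
    have h0 := hasDerivAt_mkQ (f := fun b => v α b) (g := fun _ : ℝ => (0:ℝ))
      (h := fun _ : ℝ => (0:ℝ)) (k := fun _ : ℝ => (0:ℝ))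
      hvb (hasDerivAt_const β 0) (hasDerivAt_const β 0) (hasDerivAt_const β 0)
    simpa [coe_eq_mkQ] using h0
  set Xa : ℍ[ℝ] := ((uα : ℝ) : ℍ[ℝ]) + (Ia * ((v α β : ℝ) : ℍ[ℝ]) + I * ((vα : ℝ) : ℍ[ℝ]))
    with hXa'
  set Xb : ℍ[ℝ] := ((uβ : ℝ) : ℍ[ℝ]) + (Ib * ((v α β : ℝ) : ℍ[ℝ]) + I * ((vβ : ℝ) : ℍ[ℝ]))
    with hXb'
  have hFa : HasDerivAt
      (fun a => ((u a β : ℝ) : ℍ[ℝ]) + iota a β * ((v a β : ℝ) : ℍ[ℝ])) Xa α :=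
    hcua.add (hIotaA.mul hcva)
  have hFb : HasDerivAt
      (fun b => ((u α b : ℝ) : ℍ[ℝ]) + iota α b * ((v α b : ℝ) : ℍ[ℝ])) Xb β :=
    hcub.add (hIotaB.mul hcvb)
  set Fv : ℍ[ℝ] := ((u α β : ℝ) : ℍ[ℝ]) + I * ((v α β : ℝ) : ℍ[ℝ]) with hFv'
  have hGa : HasDerivAt
      (fun a => iota a β * (((u a β : ℝ) : ℍ[ℝ]) + iota a β * ((v a β : ℝ) : ℍ[ℝ])))
      (Ia * Fv + I * Xa) α := hIotaA.mul (hcua.add (hIotaA.mul hcva))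
  have hGb : HasDerivAt
      (fun b => iota α b * (((u α b : ℝ) : ℍ[ℝ]) + iota α b * ((v α b : ℝ) : ℍ[ℝ])))
      (Ib * Fv + I * Xb) β := hIotaB.mul (hcub.add (hIotaB.mul hcvb))
  have heq' := heq (α, β) hx
  simp only [DI, pA, pB] at heq' ⊢
  rw [hiA, hiB, hinvA, hinvB] at heq' ⊢
  rw [hFa.deriv, hFb.deriv] at heq'
  rw [hGa.deriv, hGb.deriv]
  exact key I P Ia Q Ib Xa Xb (u α β) (v α β) hPIa hQIb hIP hIQ heq'
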